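/- Let A, B ∈ ℂ^{n×n} be normal matrices whose eigenvalues all have nonnegative real part, with min real parts Re(λ_{A,1}) and Re(λ_{B,1}) satisfying Re(λ_{A,1}) + Re(λ_{B,1}) > 0. If W satisfies A W + W B = S, then ‖W‖₂ ≤ ‖S‖₂ / (Re(λ_{A,1}) + Re(λ_{B,1})). -/

import Mathlib

open Matrix

noncomputable def specNorm {m n : Type*} [Fintype m] [Fintype n] [DecidableEq n]
    (M : Matrix m n ℂ) : ℝ :=
  ‖LinearMap.toContinuousLinearMap (Matrix.toEuclideanLin M)‖

open ContinuousLinearMap in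
open scoped ComplexOrder in
private lemma specNorm_aux_key {n : ℕ}  (fa : EuclideanSpace ℂ (Fin n) →L[ℂ] EuclideanSpace ℂ (Fin n))
    (hfa : IsStarNormal fa) (a : ℝ) (hspec : ∀ z ∈ spectrum ℂ fa, a ≤ z.re)
    (x : EuclideanSpace ℂ (Fin n)) :
    a * ‖x‖ ^ 2 ≤ Complex.re (inner ℂ (fa x) x : ℂ) := by
  set c : ℂ := ((2 * a : ℝ) : ℂ) with hc
  have h1 : cfc (fun z : ℂ => z + star z - c) fa
      = fa + star fa - algebraMap ℂ _ c := by
    rw [cfc_sub (fun z : ℂ => z + star z) (fun _ => c) fa,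
      cfc_add (a := fa) (fun z : ℂ => z) (fun z : ℂ => star z),
      cfc_id' (R := ℂ) (a := fa) hfa, cfc_star_id (a := fa) hfa, cfc_const c fa hfa]
  have h0 : (0 : _) ≤ fa + star fa - algebraMap ℂ _ c := by
    rw [← h1, StarOrderedRing.nonneg_iff_spectrum_nonneg (R := ℂ) _ (cfc_predicate _ _)]
    intro z hz
    rw [cfc_map_spectrum (R := ℂ) (fun z : ℂ => z + star z - c) fa hfa (by fun_prop)] at hz
    obtain ⟨w, hw, rfl⟩ := hz
    show 0 ≤ w + star w - c
    have h2 : w + star w - c = ((2 * w.re - 2 * a : ℝ) : ℂ) := by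
      rw [Complex.star_def, Complex.add_conj, hc]; push_cast; ring
    rw [h2, Complex.zero_le_real]
    have := hspec w hw
    linarith
  rw [ContinuousLinearMap.nonneg_iff_isPositive] at h0
  have h3 := h0.2 x
  rw [ContinuousLinearMap.reApplyInnerSelf_apply] at h3
  simp only [ContinuousLinearMap.sub_apply, ContinuousLinearMap.add_apply,
    Algebra.algebraMap_eq_smul_one, ContinuousLinearMap.smul_apply,
    ContinuousLinearMap.one_apply, inner_sub_left, inner_add_left, inner_smul_left] at h3
  rw [ContinuousLinearMap.star_eq_adjoint, ContinuousLinearMap.adjoint_inner_left] at h3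
  have h4 : (inner ℂ x (fa x) : ℂ) = starRingEnd ℂ (inner ℂ (fa x) x) := (inner_conj_symm _ _).symm
  have h5 : (inner ℂ x x : ℂ) = ((‖x‖ ^ 2 : ℝ) : ℂ) := by
    rw [inner_self_eq_norm_sq_to_K]; norm_cast
  rw [h4, h5] at h3
  rw [RCLike.re_to_complex] at h3
  simp only [Complex.sub_re, Complex.add_re, Complex.conj_re, Complex.mul_re, hc,
    Complex.conj_im, Complex.ofReal_re, Complex.ofReal_im] at h3
  nlinarith [sq_nonneg (‖x‖)]

open scoped ContinuousLinearMap
open ContinuousLinearMap in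
private lemma specNorm_aux_sing {n : ℕ}  (f : EuclideanSpace ℂ (Fin n) →L[ℂ] EuclideanSpace ℂ (Fin n)) (hσ : 0 < ‖f‖) :
    ∃ u v : EuclideanSpace ℂ (Fin n), ‖u‖ = 1 ∧ ‖v‖ = 1 ∧
      f v = (‖f‖ : ℂ) • u ∧ ContinuousLinearMap.adjoint f u = (‖f‖ : ℂ) • v := by
  -- a point on the sphere
  obtain ⟨x, hx⟩ : ∃ x, f x ≠ 0 := by
    by_contra h
    push_neg at h
    rw [show f = 0 from ContinuousLinearMap.ext fun y => by simp [h], norm_zero] at hσ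
    exact lt_irrefl 0 hσ
  have hx0 : x ≠ 0 := fun h => hx (by rw [h, map_zero])
  have hxn : ‖x‖ ≠ 0 := norm_ne_zero_iff.mpr hx0
  have hz : (‖x‖⁻¹ • x) ∈ Metric.sphere (0 : EuclideanSpace ℂ (Fin n)) 1 := by
    rw [mem_sphere_zero_iff_norm, norm_smul, norm_inv, norm_norm, inv_mul_cancel₀ hxn]
  obtain ⟨x₀, hx₀s, hmax⟩ := (isCompact_sphere (0 : EuclideanSpace ℂ (Fin n)) 1).exists_isMaxOn
    ⟨_, hz⟩ (f.continuous.norm.continuousOn)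
  have hx₀ : ‖x₀‖ = 1 := mem_sphere_zero_iff_norm.mp hx₀s
  have hx₀0 : x₀ ≠ 0 := by intro h; rw [h] at hx₀; simp at hx₀
  have hM : ‖f x₀‖ = ‖f‖ := by
    refine le_antisymm (f.unit_le_opNorm x₀ (le_of_eq hx₀)) ?_
    refine f.opNorm_le_bound (norm_nonneg _) fun y => ?_
    by_cases hy : y = 0
    · simp [hy]
    · have hyn : ‖y‖ ≠ 0 := norm_ne_zero_iff.mpr hy
      have hw : (‖y‖⁻¹ • y) ∈ Metric.sphere (0 : EuclideanSpace ℂ (Fin n)) 1 := by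
        rw [mem_sphere_zero_iff_norm, norm_smul, norm_inv, norm_norm, inv_mul_cancel₀ hyn]
      have := hmax hw
      simp only [Set.mem_setOf_eq] at this
      rw [f.map_smul_of_tower, norm_smul, norm_inv, norm_norm] at this
      have h2 : ‖f y‖ = ‖y‖ * (‖y‖⁻¹ * ‖f y‖) := by field_simp
      rw [h2, mul_comm ‖f x₀‖ ‖y‖]
      exact mul_le_mul_of_nonneg_left this (norm_nonneg y)
  set T := ContinuousLinearMap.adjoint f ∘L f with hT
  have hTsa : IsSelfAdjoint T := by
    rw [ContinuousLinearMap.isSelfAdjoint_iff', hT, ContinuousLinearMap.adjoint_comp,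
      ContinuousLinearMap.adjoint_adjoint]
  have hre : ∀ y, T.reApplyInnerSelf y = ‖f y‖ ^ 2 := fun y => by
    rw [ContinuousLinearMap.reApplyInnerSelf_apply, hT, ContinuousLinearMap.comp_apply,
      ContinuousLinearMap.adjoint_inner_left]
    exact_mod_cast inner_self_eq_norm_sq (𝕜 := ℂ) (f y)
  have hextr : IsMaxOn T.reApplyInnerSelf (Metric.sphere (0 : EuclideanSpace ℂ (Fin n)) ‖x₀‖) x₀ := by
    rw [hx₀]
    intro y hy
    simp only [Set.mem_setOf_eq, hre]
    have := hmax hy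
    simp only [Set.mem_setOf_eq] at this
    exact pow_le_pow_left₀ (norm_nonneg _) this 2
  have heq := hTsa.eq_smul_self_of_isLocalExtrOn (Or.inr hextr.localize)
  have hrq : T.rayleighQuotient x₀ = ‖f‖ ^ 2 := by
    rw [ContinuousLinearMap.rayleighQuotient, hre, hx₀, hM, one_pow, div_one]
  rw [hrq] at heq
  have hσ' : (‖f‖ : ℂ) ≠ 0 := by exact_mod_cast ne_of_gt hσ
  refine ⟨(‖f‖ : ℂ)⁻¹ • f x₀, x₀, ?_, hx₀, ?_, ?_⟩
  · rw [norm_smul, norm_inv, hM]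
    simp only [Complex.norm_real, Real.norm_eq_abs, abs_of_pos hσ]
    exact inv_mul_cancel₀ (ne_of_gt hσ)
  · rw [smul_smul, mul_inv_cancel₀ hσ', one_smul]
  · rw [_root_.map_smul, ← ContinuousLinearMap.comp_apply, ← hT, heq, smul_smul]
    congr 1
    have hcast : ((‖f‖ ^ 2 : ℝ) : ℂ) = (‖f‖ : ℂ) * (‖f‖ : ℂ) := by push_cast; ring
    calc (↑‖f‖ : ℂ)⁻¹ * ((‖f‖ ^ 2 : ℝ) : ℂ) = (↑‖f‖ : ℂ)⁻¹ * ((‖f‖ : ℂ) * (‖f‖ : ℂ)) := by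
          rw [hcast]
      _ = ↑‖f‖ := by rw [← mul_assoc, inv_mul_cancel₀ hσ', one_mul]

open scoped ContinuousLinearMap
open ContinuousLinearMap in
private lemma specNorm_eq_clm {n : ℕ} (M : Matrix (Fin n) (Fin n) ℂ) :
    specNorm M = ‖Matrix.toEuclideanCLM (𝕜 := ℂ) M‖ := by
  unfold specNorm
  congr 1

/-- Perturbation bound for the Sylvester operator with normal coefficients whose spectra lie
in the closed right half-plane: if `A W + W B = S` then
`‖W‖₂ ≤ ‖S‖₂ / (Re λ_{A,1} + Re λ_{B,1})`. -/
theorem sylvester_operator_inverse_bound {n : ℕ}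
    (A B W S : Matrix (Fin n) (Fin n) ℂ) (a b : ℝ)
    (hA : A * Aᴴ = Aᴴ * A) (hB : B * Bᴴ = Bᴴ * B)
    (ha : IsLeast (Complex.re '' spectrum ℂ A) a)
    (hb : IsLeast (Complex.re '' spectrum ℂ B) b)
    (ha0 : 0 ≤ a) (hb0 : 0 ≤ b) (hab : 0 < a + b)
    (hW : A * W + W * B = S) :
    specNorm W ≤ specNorm S / (a + b) := by
  set f := Matrix.toEuclideanCLM (𝕜 := ℂ) W with hf
  set g := Matrix.toEuclideanCLM (𝕜 := ℂ) S with hg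
  set fa := Matrix.toEuclideanCLM (𝕜 := ℂ) A with hfa
  set fb := Matrix.toEuclideanCLM (𝕜 := ℂ) B with hfb
  rw [specNorm_eq_clm W, specNorm_eq_clm S, ← hf, ← hg]
  rcases eq_or_lt_of_le (norm_nonneg f) with h0 | hσ
  · rw [← h0]
    exact div_nonneg (norm_nonneg g) hab.le
  obtain ⟨u, v, hu, hv, hfv, hadj⟩ := specNorm_aux_sing f hσ
  -- spectra
  have hspA : ∀ z ∈ spectrum ℂ fa, a ≤ z.re := by
    intro z hz
    rw [hfa, AlgEquiv.spectrum_eq (Matrix.toEuclideanCLM (𝕜 := ℂ)) A] at hz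
    exact ha.2 ⟨z, hz, rfl⟩
  have hspB : ∀ z ∈ spectrum ℂ fb, b ≤ z.re := by
    intro z hz
    rw [hfb, AlgEquiv.spectrum_eq (Matrix.toEuclideanCLM (𝕜 := ℂ)) B] at hz
    exact hb.2 ⟨z, hz, rfl⟩
  -- normality
  have hNA : IsStarNormal fa := by
    constructor
    rw [Commute, SemiconjBy, hfa, ← map_star, ← _root_.map_mul, ← _root_.map_mul,
      Matrix.star_eq_conjTranspose, hA]
  have hNB : IsStarNormal fb := by
    constructor
    rw [Commute, SemiconjBy, hfb, ← map_star, ← _root_.map_mul, ← _root_.map_mul,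
      Matrix.star_eq_conjTranspose, hB]
  have hbndA := specNorm_aux_key fa hNA a hspA u
  have hbndB := specNorm_aux_key fb hNB b hspB v
  rw [hu] at hbndA
  rw [hv] at hbndB
  simp only [one_pow, mul_one] at hbndA hbndB
  -- the operator equation
  have heq : fa * f + f * fb = g := by
    rw [hfa, hf, hfb, hg, ← _root_.map_mul, ← _root_.map_mul, ← _root_.map_add, hW]
  -- key inner product computation
  have h1 : g v = fa (f v) + f (fb v) := by
    rw [← heq]
    simp [ContinuousLinearMap.add_apply, ContinuousLinearMap.mul_apply]
  have hQ : (inner ℂ (g v) u : ℂ)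
      = (‖f‖ : ℂ) * (inner ℂ (fa u) u + inner ℂ (fb v) v) := by
    rw [h1, inner_add_left, hfv, _root_.map_smul, inner_smul_left]
    have h2 : (inner ℂ (f (fb v)) u : ℂ) = inner ℂ (fb v) (ContinuousLinearMap.adjoint f u) := by
      rw [ContinuousLinearMap.adjoint_inner_right]
    rw [h2, hadj, inner_smul_right, Complex.conj_ofReal]
    ring
  have hre : ‖f‖ * (a + b) ≤ Complex.re (inner ℂ (g v) u : ℂ) := by
    rw [hQ]
    have h3 : ((‖f‖ : ℂ) * (inner ℂ (fa u) u + inner ℂ (fb v) v)).re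
        = ‖f‖ * ((inner ℂ (fa u) u : ℂ).re + (inner ℂ (fb v) v : ℂ).re) := by
      rw [Complex.re_ofReal_mul, Complex.add_re]
    rw [h3]
    exact mul_le_mul_of_nonneg_left (add_le_add hbndA hbndB) (norm_nonneg f)
  have habs : Complex.re (inner ℂ (g v) u : ℂ) ≤ ‖g‖ := by
    calc Complex.re (inner ℂ (g v) u : ℂ) ≤ ‖(inner ℂ (g v) u : ℂ)‖ := Complex.re_le_norm _
      _ = ‖(inner ℂ (g v) u : ℂ)‖ := rfl
      _ ≤ ‖g v‖ * ‖u‖ := norm_inner_le_norm _ _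
      _ = ‖g v‖ := by rw [hu, mul_one]
      _ ≤ ‖g‖ * ‖v‖ := g.le_opNorm v
      _ = ‖g‖ := by rw [hv, mul_one]
  rw [le_div_iff₀ hab]
  linarith
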